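/- There are exactly 9 additively stable subsets of Φ of cardinality 2: the six pairs of (cyclically) adjacent elements {(1,0),(0,1)}, {(0,1),(-1,1)}, {(-1,1),(-1,0)}, {(-1,0),(0,-1)}, {(0,-1),(1,-1)}, {(1,-1),(1,0)}, and the three pairs of opposite elements {(1,0),(-1,0)}, {(0,1),(0,-1)}, {(1,-1),(-1,1)}. -/
import Mathlib

def Phi : Finset (ℤ × ℤ) := {(1,0),(0,1),(1,-1),(0,-1),(-1,1),(-1,0)}

def addStable (E : Finset (ℤ × ℤ)) : Prop :=
  (AddSubmonoid.closure (E : Set (ℤ × ℤ)) : Set (ℤ × ℤ)) ∩ (Phi : Set (ℤ × ℤ)) = (E : Set (ℤ × ℤ))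

def halfPlane (u v : ℤ) : AddSubmonoid (ℤ × ℤ) where
  carrier := {p | 0 ≤ u * p.1 + v * p.2}
  zero_mem' := by simp
  add_mem' := by intro a b ha hb; simp only [Set.mem_setOf_eq, Prod.fst_add, Prod.snd_add] at *; nlinarith

def line (u v : ℤ) : AddSubmonoid (ℤ × ℤ) where
  carrier := {p | u * p.1 + v * p.2 = 0}
  zero_mem' := by simp
  add_mem' := by intro a b ha hb; simp only [Set.mem_setOf_eq, Prod.fst_add, Prod.snd_add] at *; nlinarith

@[simp] lemma mem_halfPlane {u v : ℤ} {p : ℤ × ℤ} : p ∈ halfPlane u v ↔ 0 ≤ u * p.1 + v * p.2 := Iff.rfl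
@[simp] lemma mem_line {u v : ℤ} {p : ℤ × ℤ} : p ∈ line u v ↔ u * p.1 + v * p.2 = 0 := Iff.rfl

lemma stable_of (a b : ℤ × ℤ) (S : AddSubmonoid (ℤ × ℤ)) (ha : a ∈ S) (hb : b ∈ S)
    (h : ∀ x ∈ Phi, x ∈ S → x = a ∨ x = b) (haΦ : a ∈ Phi) (hbΦ : b ∈ Phi) :
    addStable {a, b} := by
  apply Set.eq_of_subset_of_subset
  · rintro x ⟨hx1, hx2⟩
    have hle : AddSubmonoid.closure (({a,b} : Finset (ℤ×ℤ)) : Set (ℤ×ℤ)) ≤ S := by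
      apply AddSubmonoid.closure_le.mpr
      intro y hy
      simp only [Finset.coe_insert, Finset.coe_singleton, Set.mem_insert_iff,
        Set.mem_singleton_iff] at hy
      rcases hy with rfl | rfl <;> assumption
    rcases h x (by simpa using hx2) (hle hx1) with rfl | rfl <;> simp
  · intro x hx
    simp only [Finset.coe_insert, Finset.coe_singleton, Set.mem_insert_iff,
      Set.mem_singleton_iff] at hx
    constructor
    · apply AddSubmonoid.subset_closure
      rcases hx with rfl | rfl <;> simp
    · rcases hx with rfl | rfl <;> simpa using ‹_›

lemma not_stable (a b : ℤ × ℤ) (hc : a + b ∈ Phi) (hne : a + b ∉ ({a, b} : Finset (ℤ × ℤ)))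
    (h : addStable {a, b}) : False := by
  have hmem : a + b ∈ (AddSubmonoid.closure (({a,b} : Finset (ℤ×ℤ)) : Set (ℤ×ℤ)) : Set (ℤ×ℤ)) ∩ (Phi : Set (ℤ×ℤ)) :=
    ⟨add_mem (AddSubmonoid.subset_closure (by simp)) (AddSubmonoid.subset_closure (by simp)), by simpa using hc⟩
  rw [h] at hmem
  exact hne (by simpa using hmem)

-- stable instances
lemma st1 : addStable ({(1,0),(0,1)} : Finset (ℤ×ℤ)) := by
  apply stable_of _ _ (halfPlane 1 0 ⊓ halfPlane 0 1) (by simp) (by simp) ?_ (by decide) (by decide)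
  intro x hx hS; fin_cases hx <;> simp_all
lemma st2 : addStable ({(0,1),(-1,1)} : Finset (ℤ×ℤ)) := by
  apply stable_of _ _ (halfPlane (-1) 0 ⊓ halfPlane 1 1) (by simp) (by simp) ?_ (by decide) (by decide)
  intro x hx hS; fin_cases hx <;> simp_all
lemma st3 : addStable ({(-1,1),(-1,0)} : Finset (ℤ×ℤ)) := by
  apply stable_of _ _ (halfPlane (-1) 0 ⊓ halfPlane 0 1 ⊓ halfPlane (-1) (-1)) (by simp) (by simp) ?_ (by decide) (by decide)
  intro x hx hS; fin_cases hx <;> simp_all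
lemma st4 : addStable ({(-1,0),(0,-1)} : Finset (ℤ×ℤ)) := by
  apply stable_of _ _ (halfPlane (-1) 0 ⊓ halfPlane 0 (-1)) (by simp) (by simp) ?_ (by decide) (by decide)
  intro x hx hS; fin_cases hx <;> simp_all
lemma st5 : addStable ({(0,-1),(1,-1)} : Finset (ℤ×ℤ)) := by
  apply stable_of _ _ (halfPlane 1 0 ⊓ halfPlane (-1) (-1)) (by simp) (by simp) ?_ (by decide) (by decide)
  intro x hx hS; fin_cases hx <;> simp_all
lemma st6 : addStable ({(1,-1),(1,0)} : Finset (ℤ×ℤ)) := by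
  apply stable_of _ _ (halfPlane 1 0 ⊓ halfPlane 0 (-1) ⊓ halfPlane 1 1) (by simp) (by simp) ?_ (by decide) (by decide)
  intro x hx hS; fin_cases hx <;> simp_all
lemma st7 : addStable ({(1,0),(-1,0)} : Finset (ℤ×ℤ)) := by
  apply stable_of _ _ (line 0 1) (by simp) (by simp) ?_ (by decide) (by decide)
  intro x hx hS; fin_cases hx <;> simp_all
lemma st8 : addStable ({(0,1),(0,-1)} : Finset (ℤ×ℤ)) := by
  apply stable_of _ _ (line 1 0) (by simp) (by simp) ?_ (by decide) (by decide)
  intro x hx hS; fin_cases hx <;> simp_all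
lemma st9 : addStable ({(1,-1),(-1,1)} : Finset (ℤ×ℤ)) := by
  apply stable_of _ _ (line 1 1) (by simp) (by simp) ?_ (by decide) (by decide)
  intro x hx hS; fin_cases hx <;> simp_all

theorem stmt_6 :
    {E : Finset (ℤ × ℤ) | E ⊆ Phi ∧ E.card = 2 ∧ addStable E} =
      ({ {(1,0),(0,1)}, {(0,1),(-1,1)}, {(-1,1),(-1,0)}, {(-1,0),(0,-1)},
         {(0,-1),(1,-1)}, {(1,-1),(1,0)},
         {(1,0),(-1,0)}, {(0,1),(0,-1)}, {(1,-1),(-1,1)} } : Set (Finset (ℤ × ℤ))) ∧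
    {E : Finset (ℤ × ℤ) | E ⊆ Phi ∧ E.card = 2 ∧ addStable E}.ncard = 9 := by
  have heq : {E : Finset (ℤ × ℤ) | E ⊆ Phi ∧ E.card = 2 ∧ addStable E} =
      ({ {(1,0),(0,1)}, {(0,1),(-1,1)}, {(-1,1),(-1,0)}, {(-1,0),(0,-1)},
         {(0,-1),(1,-1)}, {(1,-1),(1,0)},
         {(1,0),(-1,0)}, {(0,1),(0,-1)}, {(1,-1),(-1,1)} } : Set (Finset (ℤ × ℤ))) := by
    ext E
    simp only [Set.mem_setOf_eq, Set.mem_insert_iff, Set.mem_singleton_iff]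
    constructor
    · rintro ⟨h1, h2, h3⟩
      obtain ⟨a, b, hab, rfl⟩ := Finset.card_eq_two.mp h2
      have ha : a ∈ Phi := h1 (by simp)
      have hb : b ∈ Phi := h1 (by simp)
      fin_cases ha <;> fin_cases hb <;>
        first
          | exact absurd rfl hab
          | decide
          | exact (not_stable _ _ (by decide) (by decide) h3).elim
    · rintro (rfl|rfl|rfl|rfl|rfl|rfl|rfl|rfl|rfl)
      exacts [⟨by decide, by decide, st1⟩, ⟨by decide, by decide, st2⟩, ⟨by decide, by decide, st3⟩,
        ⟨by decide, by decide, st4⟩, ⟨by decide, by decide, st5⟩, ⟨by decide, by decide, st6⟩,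
        ⟨by decide, by decide, st7⟩, ⟨by decide, by decide, st8⟩, ⟨by decide, by decide, st9⟩]
  refine ⟨heq, ?_⟩
  rw [heq, show ({ {(1,0),(0,1)}, {(0,1),(-1,1)}, {(-1,1),(-1,0)}, {(-1,0),(0,-1)},
         {(0,-1),(1,-1)}, {(1,-1),(1,0)},
         {(1,0),(-1,0)}, {(0,1),(0,-1)}, {(1,-1),(-1,1)} } : Set (Finset (ℤ × ℤ))) =
      (↑({ {(1,0),(0,1)}, {(0,1),(-1,1)}, {(-1,1),(-1,0)}, {(-1,0),(0,-1)},
         {(0,-1),(1,-1)}, {(1,-1),(1,0)},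
         {(1,0),(-1,0)}, {(0,1),(0,-1)}, {(1,-1),(-1,1)} } : Finset (Finset (ℤ × ℤ))) : Set (Finset (ℤ × ℤ))) from by simp,
      Set.ncard_coe_finset]
  decide
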